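/- Let G be a finite simple graph whose vertex set is partitioned into blocks C_0, C_1, …, C_k with k ≥ 1, and let G' be the graph constructed from G as described. Then every dominating set D of G' of size k satisfies |D ∩ (C_i ∪ {a_i})| = 1 for every 1 ≤ i ≤ k, and D contains no vertex outside ⋃_{i=1}^{k} (C_i ∪ {a_i}). -/
import Mathlib


/-- `D` is a dominating set: every vertex is in `D` or adjacent to a vertex of `D`. -/
def IsDominating {V : Type*} (G : SimpleGraph V) (D : Set V) : Prop :=
  ∀ v, v ∈ D ∨ ∃ u ∈ D, G.Adj u v

/-- Base relation for the construction: keep the edges of `G`; make each block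
`C i`, `i ≥ 1`, a clique; add a new vertex `aᵢ` (encoded `Sum.inr i`) adjacent
exactly to `C i` for `i ≥ 1`; and add a new vertex `a₀` adjacent to every
vertex of `C 0 ∪ C 1 ∪ … ∪ C k`. -/
def colorRel {V : Type*} {k : ℕ} (G : SimpleGraph V) (C : Fin (k + 1) → Set V) :
    V ⊕ Fin (k + 1) → V ⊕ Fin (k + 1) → Prop
  | .inl u, .inl v => G.Adj u v ∨ ∃ i, i ≠ 0 ∧ u ∈ C i ∧ v ∈ C i
  | .inr i, .inl u => (i = 0 ∧ u ∈ ⋃ j, C j) ∨ (i ≠ 0 ∧ u ∈ C i)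
  | _, _ => False

/-- The graph `G'` constructed from `G` and its blocks. -/
def colorGraph {V : Type*} {k : ℕ} (G : SimpleGraph V)
    (C : Fin (k + 1) → Set V) : SimpleGraph (V ⊕ Fin (k + 1)) :=
  SimpleGraph.fromRel (colorRel G C)

/-- Let `G` be a finite graph whose vertex set is partitioned into blocks
`C 0, …, C k` with `k ≥ 1`. Every dominating set `D` of the constructed
graph `G'` of size `k` contains exactly one vertex from each set
`C i ∪ {aᵢ}`, `1 ≤ i ≤ k`, and no vertex outside the union of these sets. -/
theorem dominating_structure_colorGraph {V : Type*} [Fintype V] {k : ℕ}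
    (hk : 1 ≤ k) (G : SimpleGraph V) (C : Fin (k + 1) → Set V)
    (hdisj : ∀ i j, i ≠ j → Disjoint (C i) (C j))
    (hcover : (⋃ i, C i) = Set.univ)
    (D : Set (V ⊕ Fin (k + 1)))
    (hD : IsDominating (colorGraph G C) D) (hcard : D.ncard = k) :
    (∀ i : Fin (k + 1), i ≠ 0 →
        (D ∩ (Sum.inl '' C i ∪ {Sum.inr i})).ncard = 1) ∧
      ∀ v ∈ D, ∃ i : Fin (k + 1), i ≠ 0 ∧ v ∈ Sum.inl '' C i ∪ {Sum.inr i} := by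
  classical
  set B : Fin (k + 1) → Set (V ⊕ Fin (k + 1)) :=
    fun i => Sum.inl '' C i ∪ {Sum.inr i} with hBdef
  have hBdisj : ∀ i j : Fin (k + 1), i ≠ j → Disjoint (B i) (B j) := by
    intro i j hij
    rw [Set.disjoint_left]
    rintro x hxi hxj
    rcases hxi with ⟨u, hu, rfl⟩ | hxi
    · rcases hxj with ⟨v, hv, hvu⟩ | hxj
      · rw [Sum.inl.injEq] at hvu; subst hvu
        exact Set.disjoint_left.mp (hdisj i j hij) hu hv
      · exact absurd hxj (by simp)
    · rw [Set.mem_singleton_iff] at hxi; subst hxi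
      rcases hxj with ⟨v, hv, hvu⟩ | hxj
      · simp at hvu
      · rw [Set.mem_singleton_iff, Sum.inr.injEq] at hxj; exact hij hxj
  have hne : ∀ i : Fin (k + 1), i ≠ 0 → (D ∩ B i).Nonempty := by
    intro i hi
    rcases hD (Sum.inr i) with h | ⟨u, hu, hadj⟩
    · exact ⟨Sum.inr i, h, Or.inr rfl⟩
    · rw [colorGraph, SimpleGraph.fromRel_adj] at hadj
      rcases hadj with ⟨-, h | h⟩
      · cases u with
        | inl w => exact absurd h (by simp [colorRel])
        | inr j => exact absurd h (by simp [colorRel])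
      · cases u with
        | inl w =>
          rcases h with ⟨h0, _⟩ | ⟨_, hw⟩
          · exact absurd h0 hi
          · exact ⟨Sum.inl w, hu, Or.inl ⟨w, hw, rfl⟩⟩
        | inr j => exact absurd h (by simp [colorRel])
  -- choose a representative of `D ∩ B i` for each `i ≠ 0`
  set x : Fin (k + 1) → V ⊕ Fin (k + 1) :=
    fun i => if h : i = 0 then Sum.inr 0 else (hne i h).some with hxdef
  have hx : ∀ i : Fin (k + 1), i ≠ 0 → x i ∈ D ∩ B i := by
    intro i h
    simp only [hxdef, dif_neg h]
    exact (hne i h).some_mem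
  set s : Finset (Fin (k + 1)) := Finset.univ.erase 0 with hsdef
  have hmem_s : ∀ i, i ∈ s ↔ i ≠ 0 := by
    intro i; simp [hsdef]
  have hscard : s.card = k := by
    rw [hsdef, Finset.card_erase_of_mem (Finset.mem_univ _)]
    simp
  have hDfin : D.Finite := Set.toFinite D
  have hinj : Set.InjOn x s := by
    intro i hi j hj hxy
    by_contra hij
    have h1 : x j ∈ B i := hxy ▸ (hx i ((hmem_s i).mp hi)).2
    have h2 := (hx j ((hmem_s j).mp hj)).2
    exact Set.disjoint_left.mp (hBdisj i j hij) h1 h2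
  have himg : Finset.image x s = hDfin.toFinset := by
    apply Finset.eq_of_subset_of_card_le
    · intro v hv
      rcases Finset.mem_image.mp hv with ⟨i, hi, rfl⟩
      exact hDfin.mem_toFinset.mpr (hx i ((hmem_s i).mp hi)).1
    · rw [Finset.card_image_of_injOn hinj, hscard,
        ← Set.ncard_eq_toFinset_card D hDfin, hcard]
  have hrep : ∀ v ∈ D, ∃ i ∈ s, x i = v := by
    intro v hv
    have : v ∈ Finset.image x s := himg ▸ hDfin.mem_toFinset.mpr hv
    rcases Finset.mem_image.mp this with ⟨i, hi, hxi⟩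
    exact ⟨i, hi, hxi⟩
  constructor
  · intro i hi
    have : D ∩ B i = {x i} := by
      apply Set.eq_singleton_iff_unique_mem.mpr
      refine ⟨hx i hi, ?_⟩
      intro v ⟨hvD, hvB⟩
      rcases hrep v hvD with ⟨j, hj, rfl⟩
      have h2 := (hx j ((hmem_s j).mp hj)).2
      by_contra hji
      have hij : j ≠ i := fun h => hji (by rw [h])
      exact Set.disjoint_left.mp (hBdisj j i hij) h2 hvB
    rw [this, Set.ncard_singleton]
  · intro v hv
    rcases hrep v hv with ⟨i, hi, rfl⟩
    exact ⟨i, (hmem_s i).mp hi, (hx i ((hmem_s i).mp hi)).2⟩
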